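/- arXiv:1202.0504 — 2 statements merged into one kernel-verified Lean document; each statement's English description precedes it below -/
import Mathlib

section
/- Let φ ∈ (0, 2π). Then there exists a constant c(φ) > 0 such that for all ξ, η, ζ ∈ (0, 1], setting x = (ξ, 0), y = (η, 0) and z = ζ·(cos φ, sin φ) in ℝ², one has κ(x, y, z) ≤ c(φ) · 2ζ / ((ξ² + ζ²)^{1/2} · (η² + ζ²)^{1/2}). -/
open MeasureTheory Real
open scoped ENNReal NNReal Classical

/-- The Menger curvature of three points in `ℝⁿ`: the reciprocal of the circumradius,
`κ(x,y,z) = 2 dist(z, L_{x,y}) / (|x-z| |y-z|)` for pairwise distinct non-collinear points,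
and `0` otherwise. -/
noncomputable def menger {n : ℕ} (x y z : EuclideanSpace ℝ (Fin n)) : ℝ :=
  if x ≠ y ∧ y ≠ z ∧ x ≠ z ∧ ¬ Collinear ℝ ({x, y, z} : Set (EuclideanSpace ℝ (Fin n)))
  then 2 * Metric.infDist z (affineSpan ℝ ({x, y} : Set (EuclideanSpace ℝ (Fin n))) :
      Set (EuclideanSpace ℝ (Fin n))) / (dist x z * dist y z)
  else 0

/-- The point `(a, b) ∈ ℝ²` (with the Euclidean metric). -/
noncomputable def pt (a b : ℝ) : EuclideanSpace ℝ (Fin 2) :=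
  (WithLp.equiv 2 (Fin 2 → ℝ)).symm ![a, b]

lemma pt_apply (a b : ℝ) (i : Fin 2) : pt a b i = ![a, b] i := rfl

lemma smul_pt (r a b : ℝ) : r • pt a b = pt (r*a) (r*b) := by
  ext i; fin_cases i <;> simp [pt_apply]

lemma add_pt (a b c d : ℝ) : pt a b + pt c d = pt (a+c) (b+d) := by
  ext i; fin_cases i <;> simp [pt_apply]

lemma dist_pt (a b c d : ℝ) : dist (pt a b) (pt c d) = Real.sqrt ((a-c)^2+(b-d)^2) := by
  rw [EuclideanSpace.dist_eq]
  simp [pt_apply, Fin.sum_univ_two, Real.dist_eq, sq_abs]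

lemma pt_inj {a b c d : ℝ} (h : pt a b = pt c d) : a = c ∧ b = d := by
  constructor
  · have h0 : pt a b 0 = pt c d 0 := by rw [h]
    simpa [pt_apply] using h0
  · have h1 : pt a b 1 = pt c d 1 := by rw [h]
    simpa [pt_apply] using h1

lemma collinear_pts (a b c : ℝ) :
    Collinear ℝ ({pt a 0, pt b 0, pt c 0} : Set (EuclideanSpace ℝ (Fin 2))) := by
  rw [collinear_iff_exists_forall_eq_smul_vadd]
  refine ⟨pt 0 0, pt 1 0, ?_⟩
  rintro p (rfl | rfl | rfl)
  · exact ⟨a, by simp [smul_pt, add_pt, vadd_eq_add]⟩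
  · exact ⟨b, by simp [smul_pt, add_pt, vadd_eq_add]⟩
  · exact ⟨c, by simp [smul_pt, add_pt, vadd_eq_add]⟩


/-- Estimate of `κ` for points on the two arms of `E_φ`. -/
theorem menger_corner_estimate (φ : ℝ) (hφ : φ ∈ Set.Ioo 0 (2 * π)) :
    ∃ c : ℝ, 0 < c ∧ ∀ ξ ∈ Set.Ioc (0:ℝ) 1, ∀ η ∈ Set.Ioc (0:ℝ) 1, ∀ ζ ∈ Set.Ioc (0:ℝ) 1,
      menger (pt ξ 0) (pt η 0) (ζ • pt (Real.cos φ) (Real.sin φ)) ≤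
        c * (2 * ζ / (Real.sqrt (ξ ^ 2 + ζ ^ 2) * Real.sqrt (η ^ 2 + ζ ^ 2))) := by
  set K : ℝ := 1 - |Real.cos φ| with hKdef
  refine ⟨max 1 (|Real.sin φ| / K), lt_of_lt_of_le one_pos (le_max_left _ _), ?_⟩
  rintro ξ ⟨hξ, hξ1⟩ η ⟨hη, hη1⟩ ζ ⟨hζ, hζ1⟩
  set c : ℝ := max 1 (|Real.sin φ| / K) with hc
  have hc0 : (0:ℝ) < c := lt_of_lt_of_le one_pos (le_max_left _ _)
  have hA : (0:ℝ) < Real.sqrt (ξ^2+ζ^2) := Real.sqrt_pos.2 (by positivity)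
  have hB : (0:ℝ) < Real.sqrt (η^2+ζ^2) := Real.sqrt_pos.2 (by positivity)
  have hRHS0 : 0 ≤ c * (2 * ζ / (Real.sqrt (ξ ^ 2 + ζ ^ 2) * Real.sqrt (η ^ 2 + ζ ^ 2))) := by
    positivity
  have hz : ζ • pt (Real.cos φ) (Real.sin φ) = pt (ζ * Real.cos φ) (ζ * Real.sin φ) :=
    smul_pt _ _ _
  by_cases hs : Real.sin φ = 0
  · -- collinear case: menger = 0
    have : menger (pt ξ 0) (pt η 0) (ζ • pt (Real.cos φ) (Real.sin φ)) = 0 := by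
      rw [menger, if_neg]
      rintro ⟨-, -, -, hcol⟩
      apply hcol
      rw [hz, hs, mul_zero]
      exact collinear_pts ξ η (ζ * Real.cos φ)
    rw [this]; exact hRHS0
  · rw [menger]
    split_ifs with h
    swap
    · exact hRHS0
    obtain ⟨hxy, -, -, -⟩ := h
    have hξη : ξ ≠ η := fun he => hxy (by rw [he])
    -- K > 0
    have hcs := Real.sin_sq_add_cos_sq φ
    have hs2 : 0 < Real.sin φ ^ 2 := by positivity
    have hK : 0 < K := by
      have h1 : |Real.cos φ| < 1 := by
        rw [abs_lt]
        constructor <;> nlinarith [sq_nonneg (Real.cos φ + 1), sq_nonneg (Real.cos φ - 1)]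
      simpa [hKdef] using h1
    -- distance lower bounds
    have key : ∀ a : ℝ, 0 < a →
        Real.sqrt K * Real.sqrt (a^2+ζ^2) ≤ dist (pt a 0) (ζ • pt (Real.cos φ) (Real.sin φ)) := by
      intro a ha
      rw [hz, dist_pt, ← Real.sqrt_mul hK.le]
      apply Real.sqrt_le_sqrt
      have habs : Real.cos φ ≤ |Real.cos φ| := le_abs_self _
      have habs0 : 0 ≤ |Real.cos φ| := abs_nonneg _
      nlinarith [sq_nonneg (a - ζ), mul_pos ha hζ, sq_nonneg (a*ζ)]
    have hxz := key ξ hξ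
    have hyz := key η hη
    -- infDist bound
    set t : ℝ := (ζ * Real.cos φ - ξ) / (η - ξ) with ht
    have hne : η - ξ ≠ 0 := sub_ne_zero.2 (Ne.symm hξη)
    have hscal : (1-t)*ξ + t*η = ζ * Real.cos φ := by
      field_simp [ht]
      have htm : t * (η - ξ) = ζ * Real.cos φ - ξ := by rw [ht]; exact div_mul_cancel₀ _ hne
      linear_combination htm
    have hw : AffineMap.lineMap (pt ξ 0) (pt η 0) t = pt (ζ * Real.cos φ) 0 := by
      rw [AffineMap.lineMap_apply_module, smul_pt, smul_pt, add_pt, hscal, mul_zero, mul_zero,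
        add_zero]
    have hinf : Metric.infDist (ζ • pt (Real.cos φ) (Real.sin φ))
        (affineSpan ℝ ({pt ξ 0, pt η 0} : Set (EuclideanSpace ℝ (Fin 2))) :
          Set (EuclideanSpace ℝ (Fin 2))) ≤ ζ * |Real.sin φ| := by
      have hmem := AffineMap.lineMap_mem_affineSpan_pair t (pt ξ 0) (pt η 0)
      refine le_trans (Metric.infDist_le_dist_of_mem hmem) ?_
      rw [hw, hz, dist_pt]
      rw [show (ζ * Real.cos φ - ζ * Real.cos φ)^2 + (ζ * Real.sin φ - 0)^2
          = (ζ * |Real.sin φ|)^2 by rw [mul_pow, sq_abs]; ring]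
      exact Real.sqrt_sq (by positivity) |>.le
    -- combine
    have hinf0 : 0 ≤ Metric.infDist (ζ • pt (Real.cos φ) (Real.sin φ))
        (affineSpan ℝ ({pt ξ 0, pt η 0} : Set (EuclideanSpace ℝ (Fin 2))) :
          Set (EuclideanSpace ℝ (Fin 2))) := Metric.infDist_nonneg
    have hden : 0 < Real.sqrt K * Real.sqrt (ξ^2+ζ^2) * (Real.sqrt K * Real.sqrt (η^2+ζ^2)) := by
      have := Real.sqrt_pos.2 hK
      positivity
    have step1 : 2 * Metric.infDist (ζ • pt (Real.cos φ) (Real.sin φ))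
        (affineSpan ℝ ({pt ξ 0, pt η 0} : Set (EuclideanSpace ℝ (Fin 2))) :
          Set (EuclideanSpace ℝ (Fin 2))) /
        (dist (pt ξ 0) (ζ • pt (Real.cos φ) (Real.sin φ)) *
          dist (pt η 0) (ζ • pt (Real.cos φ) (Real.sin φ))) ≤
        2 * (ζ * |Real.sin φ|) /
        (Real.sqrt K * Real.sqrt (ξ^2+ζ^2) * (Real.sqrt K * Real.sqrt (η^2+ζ^2))) := by
      apply div_le_div₀ (by positivity) (by linarith) hden
      exact mul_le_mul hxz hyz (by positivity) dist_nonneg |>.trans_eq rfl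
    refine step1.trans ?_
    have heq : 2 * (ζ * |Real.sin φ|) /
        (Real.sqrt K * Real.sqrt (ξ^2+ζ^2) * (Real.sqrt K * Real.sqrt (η^2+ζ^2))) =
        (|Real.sin φ| / K) * (2 * ζ / (Real.sqrt (ξ^2+ζ^2) * Real.sqrt (η^2+ζ^2))) := by
      have hKK : Real.sqrt K * Real.sqrt K = K := Real.mul_self_sqrt hK.le
      rw [show Real.sqrt K * Real.sqrt (ξ^2+ζ^2) * (Real.sqrt K * Real.sqrt (η^2+ζ^2))
          = K * (Real.sqrt (ξ^2+ζ^2) * Real.sqrt (η^2+ζ^2)) by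
        linear_combination (Real.sqrt (ξ^2+ζ^2) * Real.sqrt (η^2+ζ^2)) * hKK]
      field_simp
    rw [heq]
    apply mul_le_mul_of_nonneg_right (le_max_right _ _) (by positivity)
end

section
/- Let φ ∈ (0, 2π) with φ ≠ π, and let E_φ := ([0,1) × {0}) ∪ { t·(cos φ, sin φ) : t ∈ [0,1) } ⊆ ℝ². Define f : E_φ → E_{π/2} by f((t, 0)) = (t, 0) for t ∈ [0,1) and f(t·(cos φ, sin φ)) = (0, t) for t ∈ [0,1). Then there exists a constant c(φ) > 0 such that κ(x, y, z) ≤ c(φ) · κ(f(x), f(y), f(z)) for all x, y, z ∈ E_φ. -/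
open MeasureTheory Real
open scoped ENNReal NNReal Classical

abbrev E2 := EuclideanSpace ℝ (Fin 2)

lemma pt_apply0 (a b : ℝ) : pt a b 0 = a := rfl
lemma pt_apply1 (a b : ℝ) : pt a b 1 = b := rfl
lemma smul_apply' (t : ℝ) (x : E2) (i : Fin 2) : (t • x) i = t * x i := rfl
lemma add_apply' (x y : E2) (i : Fin 2) : (x + y) i = x i + y i := rfl
lemma sub_apply' (x y : E2) (i : Fin 2) : (x - y) i = x i - y i := rfl

lemma ext2 {x y : E2} (h0 : x 0 = y 0) (h1 : x 1 = y 1) : x = y := by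
  ext i; fin_cases i <;> assumption

lemma dist_eq' (x y : E2) : dist x y = Real.sqrt ((x 0 - y 0)^2 + (x 1 - y 1)^2) := by
  rw [EuclideanSpace.dist_eq, Fin.sum_univ_two]
  simp [Real.dist_eq, sq_abs]

noncomputable def det3 (x y z : E2) : ℝ :=
  (y 0 - x 0) * (z 1 - x 1) - (y 1 - x 1) * (z 0 - x 0)

lemma mem_line_iff {x y p : E2} :
    p ∈ (affineSpan ℝ ({x, y} : Set E2) : Set E2) ↔ ∃ r : ℝ, p = x + r • (y - x) := by
  constructor
  · intro hp
    have h : (p - x) +ᵥ x ∈ line[ℝ, x, y] := by simpa using hp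
    rw [vadd_left_mem_affineSpan_pair] at h
    obtain ⟨r, hr⟩ := h
    simp only [vsub_eq_sub] at hr
    exact ⟨r, by rw [hr]; abel⟩
  · rintro ⟨r, rfl⟩
    have := AffineMap.lineMap_mem_affineSpan_pair r x y
    simpa [AffineMap.lineMap_apply, vsub_eq_sub, vadd_eq_add, add_comm] using this

lemma infDist_line (x y z : E2) (hxy : x ≠ y) :
    Metric.infDist z (affineSpan ℝ ({x, y} : Set E2) : Set E2) = |det3 x y z| / dist x y := by
  set v0 := y 0 - x 0 with hv0
  set v1 := y 1 - x 1 with hv1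
  set w0 := z 0 - x 0 with hw0
  set w1 := z 1 - x 1 with hw1
  have hS : 0 < v0 ^ 2 + v1 ^ 2 := by
    rcases lt_or_eq_of_le (by positivity : (0:ℝ) ≤ v0 ^ 2 + v1 ^ 2) with h | h
    · exact h
    · exfalso; apply hxy; apply ext2 <;> nlinarith [sq_nonneg v0, sq_nonneg v1]
  have hD : dist x y = Real.sqrt (v0 ^ 2 + v1 ^ 2) := by
    rw [dist_eq']; congr 1; ring
  have hdet : det3 x y z = v0 * w1 - v1 * w0 := by simp [det3, hv0, hv1, hw0, hw1]
  apply le_antisymm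
  · set r := (w0 * v0 + w1 * v1) / (v0 ^ 2 + v1 ^ 2) with hr
    have hmem : x + r • (y - x) ∈ (affineSpan ℝ ({x, y} : Set E2) : Set E2) :=
      mem_line_iff.2 ⟨r, rfl⟩
    refine le_trans (Metric.infDist_le_dist_of_mem hmem) (le_of_eq ?_)
    rw [dist_eq', hD]
    have e0 : z 0 - (x + r • (y - x)) 0 = w0 - r * v0 := by
      simp [add_apply', smul_apply', sub_apply', hw0, hv0]; ring
    have e1 : z 1 - (x + r • (y - x)) 1 = w1 - r * v1 := by
      simp [add_apply', smul_apply', sub_apply', hw1, hv1]; ring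
    have key : (w0 - r * v0) ^ 2 + (w1 - r * v1) ^ 2 = (det3 x y z) ^ 2 / (v0 ^ 2 + v1 ^ 2) := by
      rw [hdet, hr]; field_simp; ring
    rw [e0, e1, key, Real.sqrt_div (sq_nonneg _), Real.sqrt_sq_eq_abs]
  · rw [Metric.infDist_eq_iInf]
    have hne : Nonempty ((affineSpan ℝ ({x, y} : Set E2) : Set E2)) :=
      ⟨⟨x, mem_line_iff.2 ⟨0, by simp⟩⟩⟩
    refine le_ciInf fun p => ?_
    obtain ⟨r, hp⟩ := mem_line_iff.1 p.2
    have e0 : z 0 - (p : E2) 0 = w0 - r * v0 := by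
      rw [hp]; simp [add_apply', smul_apply', sub_apply', hw0, hv0]; ring
    have e1 : z 1 - (p : E2) 1 = w1 - r * v1 := by
      rw [hp]; simp [add_apply', smul_apply', sub_apply', hw1, hv1]; ring
    rw [dist_eq' z (p : E2), hD, e0, e1, ← Real.sqrt_sq_eq_abs, ← Real.sqrt_div (sq_nonneg _)]
    apply Real.sqrt_le_sqrt
    rw [div_le_iff₀ hS, hdet]
    nlinarith [sq_nonneg ((w0 - r * v0) * v0 + (w1 - r * v1) * v1)]

lemma menger_nonneg {n : ℕ} (x y z : EuclideanSpace ℝ (Fin n)) : 0 ≤ menger x y z := by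
  rw [menger]
  split
  · have := Metric.infDist_nonneg (x := z)
      (s := (affineSpan ℝ ({x, y} : Set (EuclideanSpace ℝ (Fin n))) :
        Set (EuclideanSpace ℝ (Fin n))))
    positivity
  · exact le_rfl

lemma menger_eq_zero_of_collinear {n : ℕ} {x y z : EuclideanSpace ℝ (Fin n)}
    (h : Collinear ℝ ({x, y, z} : Set (EuclideanSpace ℝ (Fin n)))) : menger x y z = 0 := by
  rw [menger, if_neg]; tauto

lemma menger_eq {x y z : E2}
    (h : x ≠ y ∧ y ≠ z ∧ x ≠ z ∧ ¬ Collinear ℝ ({x, y, z} : Set E2)) :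
    menger x y z = 2 * |det3 x y z| / (dist x y * (dist x z * dist y z)) := by
  rw [menger, if_pos h, infDist_line x y z h.1]
  have h1 : dist x y ≠ 0 := dist_ne_zero.2 h.1
  field_simp

lemma menger_swap₁ (x y z : E2) : menger x y z = menger y x z := by
  by_cases h : x ≠ y ∧ y ≠ z ∧ x ≠ z ∧ ¬ Collinear ℝ ({x, y, z} : Set E2)
  · have h' : y ≠ x ∧ x ≠ z ∧ y ≠ z ∧ ¬ Collinear ℝ ({y, x, z} : Set E2) :=
      ⟨h.1.symm, h.2.2.1, h.2.1, by rw [Set.insert_comm]; exact h.2.2.2⟩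
    rw [menger, menger, if_pos h, if_pos h', Set.pair_comm x y]
    ring
  · have h' : ¬ (y ≠ x ∧ x ≠ z ∧ y ≠ z ∧ ¬ Collinear ℝ ({y, x, z} : Set E2)) := by
      rw [Set.insert_comm]; tauto
    rw [menger, menger, if_neg h, if_neg h']

lemma menger_swap₂ (x y z : E2) : menger x y z = menger x z y := by
  by_cases h : x ≠ y ∧ y ≠ z ∧ x ≠ z ∧ ¬ Collinear ℝ ({x, y, z} : Set E2)
  · have h' : x ≠ z ∧ z ≠ y ∧ x ≠ y ∧ ¬ Collinear ℝ ({x, z, y} : Set E2) :=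
      ⟨h.2.2.1, h.2.1.symm, h.1, by rw [Set.pair_comm z y]; exact h.2.2.2⟩
    rw [menger_eq h, menger_eq h']
    have hd : det3 x z y = -det3 x y z := by simp only [det3]; ring
    rw [hd, abs_neg, dist_comm z y]
    ring
  · have h' : ¬ (x ≠ z ∧ z ≠ y ∧ x ≠ y ∧ ¬ Collinear ℝ ({x, z, y} : Set E2)) := by
      rw [Set.pair_comm z y]
      intro ⟨a1, a2, a3, a4⟩
      exact h ⟨a3, a2.symm, a1, a4⟩
    rw [menger, menger, if_neg h, if_neg h']

lemma collinear3 (v x y z : E2) (hx : ∃ r : ℝ, x = r • v) (hy : ∃ r : ℝ, y = r • v)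
    (hz : ∃ r : ℝ, z = r • v) : Collinear ℝ ({x, y, z} : Set E2) := by
  rw [collinear_iff_exists_forall_eq_smul_vadd]
  refine ⟨0, v, fun p hp => ?_⟩
  simp only [Set.mem_insert_iff, Set.mem_singleton_iff] at hp
  rcases hp with rfl | rfl | rfl
  · obtain ⟨r, rfl⟩ := hx; exact ⟨r, by simp⟩
  · obtain ⟨r, rfl⟩ := hy; exact ⟨r, by simp⟩
  · obtain ⟨r, rfl⟩ := hz; exact ⟨r, by simp⟩

lemma collinear_det3 {x y z : E2} (h : Collinear ℝ ({x, y, z} : Set E2)) :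
    det3 x y z = 0 := by
  rw [collinear_iff_exists_forall_eq_smul_vadd] at h
  obtain ⟨p₀, v, hv⟩ := h
  obtain ⟨rx, hx⟩ := hv x (by simp)
  obtain ⟨ry, hy⟩ := hv y (by simp)
  obtain ⟨rz, hz⟩ := hv z (by simp)
  have hx0 : x 0 = rx * v 0 + p₀ 0 := by rw [hx]; rfl
  have hx1 : x 1 = rx * v 1 + p₀ 1 := by rw [hx]; rfl
  have hy0 : y 0 = ry * v 0 + p₀ 0 := by rw [hy]; rfl
  have hy1 : y 1 = ry * v 1 + p₀ 1 := by rw [hy]; rfl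
  have hz0 : z 0 = rz * v 0 + p₀ 0 := by rw [hz]; rfl
  have hz1 : z 1 = rz * v 1 + p₀ 1 := by rw [hz]; rfl
  simp only [det3, hx0, hx1, hy0, hy1, hz0, hz1]
  ring

lemma arith {K sq dL dR Dxy Dxz Dyz D'xz D'yz : ℝ} (hK : 0 < K) (hsq : sq = Real.sqrt K)
    (h1 : 0 < Dxy) (h2 : 0 < D'xz) (h3 : 0 < D'yz) (hN : |dL| ≤ |dR|)
    (E1 : sq * D'xz ≤ Dxz) (E2 : sq * D'yz ≤ Dyz) :
    2 * |dL| / (Dxy * (Dxz * Dyz)) ≤ 1 / K * (2 * |dR| / (Dxy * (D'xz * D'yz))) := by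
  have hsqpos : 0 < sq := by rw [hsq]; positivity
  have hsq2 : sq ^ 2 = K := by rw [hsq]; exact Real.sq_sqrt hK.le
  calc 2 * |dL| / (Dxy * (Dxz * Dyz))
      ≤ 2 * |dR| / (Dxy * ((sq * D'xz) * (sq * D'yz))) := by
        have hz1 : 0 < Dxz := lt_of_lt_of_le (by positivity) E1
        have hz2 : 0 < Dyz := lt_of_lt_of_le (by positivity) E2
        apply div_le_div₀ (by positivity) (by linarith) (by positivity)
        gcongr
    _ = 1 / K * (2 * |dR| / (Dxy * (D'xz * D'yz))) := by
        rw [show Dxy * ((sq * D'xz) * (sq * D'yz)) = (sq ^ 2) * (Dxy * (D'xz * D'yz)) by ring,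
          hsq2]
        field_simp

lemma abs_le_one_of_sq (c s : ℝ) (hcs : c ^ 2 + s ^ 2 = 1) : |s| ≤ 1 := by
  nlinarith [sq_abs s, abs_nonneg s, sq_nonneg c]

lemma key1 (c s : ℝ) (hcs : c ^ 2 + s ^ 2 = 1) (hK : 0 < 1 - |c|) (a b t : ℝ)
    (ha : 0 ≤ a) (hb : 0 ≤ b) (ht : 0 ≤ t) :
    menger (pt a 0) (pt b 0) (t • pt c s) ≤
      1 / (1 - |c|) * menger (pt a 0) (pt b 0) (pt 0 t) := by
  by_cases h : pt a 0 ≠ pt b 0 ∧ pt b 0 ≠ t • pt c s ∧ pt a 0 ≠ t • pt c s ∧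
      ¬ Collinear ℝ ({pt a 0, pt b 0, t • pt c s} : Set E2)
  · obtain ⟨hxy, hyz, hxz, hncol⟩ := h
    have hab : a ≠ b := fun he => hxy (by rw [he])
    have hts : t * s ≠ 0 := by
      intro h0
      apply hncol
      apply collinear3 (pt 1 0)
      · exact ⟨a, ext2 (by simp [pt_apply0, smul_apply']) (by simp [pt_apply1, smul_apply'])⟩
      · exact ⟨b, ext2 (by simp [pt_apply0, smul_apply']) (by simp [pt_apply1, smul_apply'])⟩
      · refine ⟨t * c, ext2 ?_ ?_⟩
        · simp [pt_apply0, smul_apply']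
        · simp only [smul_apply', pt_apply1, smul_apply']
          simp [h0]
    have ht0 : t ≠ 0 := fun h0 => hts (by rw [h0]; ring)
    have h2' : pt b 0 ≠ pt 0 t := fun he => ht0 ((pt_inj he).2).symm
    have h3' : pt a 0 ≠ pt 0 t := fun he => ht0 ((pt_inj he).2).symm
    have hncol' : ¬ Collinear ℝ ({pt a 0, pt b 0, pt 0 t} : Set E2) := by
      intro hc
      have hd := collinear_det3 hc
      simp only [det3, pt_apply0, pt_apply1] at hd
      rcases mul_eq_zero.1 (show (b - a) * t = 0 by linear_combination hd) with h' | h'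
      · exact hab (by linarith)
      · exact ht0 h'
    rw [menger_eq ⟨hxy, hyz, hxz, hncol⟩, menger_eq ⟨hxy, h2', h3', hncol'⟩]
    apply arith hK rfl (dist_pos.2 hxy) (dist_pos.2 h3') (dist_pos.2 h2')
    · have hdL : det3 (pt a 0) (pt b 0) (t • pt c s) = ((b - a) * t) * s := by
        simp only [det3, pt_apply0, pt_apply1, smul_apply']; ring
      have hdR : det3 (pt a 0) (pt b 0) (pt 0 t) = (b - a) * t := by
        simp only [det3, pt_apply0, pt_apply1]; ring
      rw [hdL, hdR, abs_mul]
      calc |(b - a) * t| * |s| ≤ |(b - a) * t| * 1 :=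
            mul_le_mul_of_nonneg_left (abs_le_one_of_sq c s hcs) (abs_nonneg _)
        _ = |(b - a) * t| := mul_one _
    · rw [dist_eq' (pt a 0) (pt 0 t), dist_eq' (pt a 0) (t • pt c s)]
      simp only [pt_apply0, pt_apply1, smul_apply']
      rw [← Real.sqrt_mul hK.le]
      apply Real.sqrt_le_sqrt
      have hc1 : c ≤ |c| := le_abs_self c
      have hc2 : 0 ≤ |c| := abs_nonneg c
      nlinarith [mul_nonneg (mul_nonneg ha ht) (sub_nonneg.2 hc1),
        mul_nonneg hc2 (sq_nonneg (a - t)), sq_nonneg t,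
        (by linear_combination t ^ 2 * hcs : t ^ 2 * c ^ 2 + t ^ 2 * s ^ 2 = t ^ 2)]
    · rw [dist_eq' (pt b 0) (pt 0 t), dist_eq' (pt b 0) (t • pt c s)]
      simp only [pt_apply0, pt_apply1, smul_apply']
      rw [← Real.sqrt_mul hK.le]
      apply Real.sqrt_le_sqrt
      have hc1 : c ≤ |c| := le_abs_self c
      have hc2 : 0 ≤ |c| := abs_nonneg c
      nlinarith [mul_nonneg (mul_nonneg hb ht) (sub_nonneg.2 hc1),
        mul_nonneg hc2 (sq_nonneg (b - t)), sq_nonneg t,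
        (by linear_combination t ^ 2 * hcs : t ^ 2 * c ^ 2 + t ^ 2 * s ^ 2 = t ^ 2)]
  · rw [menger, if_neg h]
    exact mul_nonneg (by positivity) (menger_nonneg _ _ _)

lemma key2 (c s : ℝ) (hcs : c ^ 2 + s ^ 2 = 1) (hK : 0 < 1 - |c|) (a b t : ℝ)
    (ha : 0 ≤ a) (hb : 0 ≤ b) (ht : 0 ≤ t) :
    menger (a • pt c s) (b • pt c s) (pt t 0) ≤
      1 / (1 - |c|) * menger (pt 0 a) (pt 0 b) (pt t 0) := by
  by_cases h : a • pt c s ≠ b • pt c s ∧ b • pt c s ≠ pt t 0 ∧ a • pt c s ≠ pt t 0 ∧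
      ¬ Collinear ℝ ({a • pt c s, b • pt c s, pt t 0} : Set E2)
  · obtain ⟨hxy, hyz, hxz, hncol⟩ := h
    have hab : a ≠ b := fun he => hxy (by rw [he])
    have ht0 : t ≠ 0 := by
      intro h0
      apply hncol
      refine collinear3 (pt c s) _ _ _ ⟨a, rfl⟩ ⟨b, rfl⟩ ⟨0, ext2 ?_ ?_⟩ <;>
        simp [pt_apply0, pt_apply1, smul_apply', h0]
    have h1' : pt 0 a ≠ pt 0 b := fun he => hab (pt_inj he).2
    have h2' : pt 0 b ≠ pt t 0 := fun he => ht0 ((pt_inj he).1).symm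
    have h3' : pt 0 a ≠ pt t 0 := fun he => ht0 ((pt_inj he).1).symm
    have hncol' : ¬ Collinear ℝ ({pt 0 a, pt 0 b, pt t 0} : Set E2) := by
      intro hc
      have hd := collinear_det3 hc
      simp only [det3, pt_apply0, pt_apply1] at hd
      rcases mul_eq_zero.1 (show (b - a) * t = 0 by linear_combination -hd) with h' | h'
      · exact hab (by linarith)
      · exact ht0 h'
    rw [menger_eq ⟨hxy, hyz, hxz, hncol⟩, menger_eq ⟨h1', h2', h3', hncol'⟩]
    have hDxy : dist (a • pt c s) (b • pt c s) = dist (pt 0 a) (pt 0 b) := by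
      rw [dist_eq', dist_eq']
      simp only [pt_apply0, pt_apply1, smul_apply']
      congr 1
      linear_combination (a - b) ^ 2 * hcs
    rw [hDxy]
    apply arith hK rfl (dist_pos.2 h1') (dist_pos.2 h3') (dist_pos.2 h2')
    · have hdL : det3 (a • pt c s) (b • pt c s) (pt t 0) = -(((b - a) * t) * s) := by
        simp only [det3, pt_apply0, pt_apply1, smul_apply']; ring
      have hdR : det3 (pt 0 a) (pt 0 b) (pt t 0) = -((b - a) * t) := by
        simp only [det3, pt_apply0, pt_apply1]; ring
      rw [hdL, hdR, abs_neg, abs_neg, abs_mul]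
      calc |(b - a) * t| * |s| ≤ |(b - a) * t| * 1 :=
            mul_le_mul_of_nonneg_left (abs_le_one_of_sq c s hcs) (abs_nonneg _)
        _ = |(b - a) * t| := mul_one _
    · rw [dist_eq' (pt 0 a) (pt t 0), dist_eq' (a • pt c s) (pt t 0)]
      simp only [pt_apply0, pt_apply1, smul_apply']
      rw [← Real.sqrt_mul hK.le]
      apply Real.sqrt_le_sqrt
      have hc1 : c ≤ |c| := le_abs_self c
      have hc2 : 0 ≤ |c| := abs_nonneg c
      nlinarith [mul_nonneg (mul_nonneg ha ht) (sub_nonneg.2 hc1),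
        mul_nonneg hc2 (sq_nonneg (a - t)), sq_nonneg a,
        (by linear_combination a ^ 2 * hcs : a ^ 2 * c ^ 2 + a ^ 2 * s ^ 2 = a ^ 2)]
    · rw [dist_eq' (pt 0 b) (pt t 0), dist_eq' (b • pt c s) (pt t 0)]
      simp only [pt_apply0, pt_apply1, smul_apply']
      rw [← Real.sqrt_mul hK.le]
      apply Real.sqrt_le_sqrt
      have hc1 : c ≤ |c| := le_abs_self c
      have hc2 : 0 ≤ |c| := abs_nonneg c
      nlinarith [mul_nonneg (mul_nonneg hb ht) (sub_nonneg.2 hc1),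
        mul_nonneg hc2 (sq_nonneg (b - t)), sq_nonneg b,
        (by linear_combination b ^ 2 * hcs : b ^ 2 * c ^ 2 + b ^ 2 * s ^ 2 = b ^ 2)]
  · rw [menger, if_neg h]
    exact mul_nonneg (by positivity) (menger_nonneg _ _ _)

lemma pt_smul (a : ℝ) : pt a 0 = a • pt 1 0 :=
  ext2 (by simp [pt_apply0, smul_apply']) (by simp [pt_apply1, smul_apply'])

/-- The one-corner set `E_φ = ([0,1) × {0}) ∪ [0,1)·(cos φ, sin φ)`. -/
noncomputable def Eset (φ : ℝ) : Set (EuclideanSpace ℝ (Fin 2)) :=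
  {x | ∃ t ∈ Set.Ico (0:ℝ) 1, x = pt t 0} ∪
    {x | ∃ t ∈ Set.Ico (0:ℝ) 1, x = t • pt (Real.cos φ) (Real.sin φ)}

/-- `κ` on `E_φ` is controlled by `κ` of the images under the straightening map `f` to
`E_{π/2}`. -/
theorem menger_le_mul_menger_image (φ : ℝ) (hφ : φ ∈ Set.Ioo 0 (2 * π)) (hφπ : φ ≠ π)
    (f : EuclideanSpace ℝ (Fin 2) → EuclideanSpace ℝ (Fin 2))
    (hf₁ : ∀ t ∈ Set.Ico (0:ℝ) 1, f (pt t 0) = pt t 0)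
    (hf₂ : ∀ t ∈ Set.Ico (0:ℝ) 1, f (t • pt (Real.cos φ) (Real.sin φ)) = pt 0 t) :
    ∃ c : ℝ, 0 < c ∧ ∀ x ∈ Eset φ, ∀ y ∈ Eset φ, ∀ z ∈ Eset φ,
      menger x y z ≤ c * menger (f x) (f y) (f z) := by
  obtain ⟨hφ0, hφ2⟩ := hφ
  have hπ := Real.pi_pos
  have hc1 : Real.cos φ ≠ 1 := by
    intro h
    have := (Real.cos_eq_one_iff_of_lt_of_lt (by linarith) hφ2).1 h
    linarith
  have hc2 : Real.cos φ ≠ -1 := by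
    intro h
    have h' : Real.cos (φ - π) = 1 := by
      rw [Real.cos_sub, Real.cos_pi, Real.sin_pi]
      rw [h]; ring
    have := (Real.cos_eq_one_iff_of_lt_of_lt (by linarith) (by linarith)).1 h'
    exact hφπ (by linarith)
  have hK : 0 < 1 - |Real.cos φ| := by
    have h1 : Real.cos φ < 1 := lt_of_le_of_ne (Real.cos_le_one φ) hc1
    have h2 : -1 < Real.cos φ := lt_of_le_of_ne (Real.neg_one_le_cos φ) (Ne.symm hc2)
    have : |Real.cos φ| < 1 := abs_lt.2 ⟨h2, h1⟩
    linarith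
  have hcs : (Real.cos φ) ^ 2 + (Real.sin φ) ^ 2 = 1 := Real.cos_sq_add_sin_sq φ
  refine ⟨1 / (1 - |Real.cos φ|), by positivity, ?_⟩
  intro x hx y hy z hz
  rcases hx with ⟨a, ha, rfl⟩ | ⟨a, ha, rfl⟩ <;>
    rcases hy with ⟨b, hb, rfl⟩ | ⟨b, hb, rfl⟩ <;>
    rcases hz with ⟨t, htt, rfl⟩ | ⟨t, htt, rfl⟩
  · rw [menger_eq_zero_of_collinear
      (collinear3 (pt 1 0) _ _ _ ⟨a, pt_smul a⟩ ⟨b, pt_smul b⟩ ⟨t, pt_smul t⟩)]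
    exact mul_nonneg (by positivity) (menger_nonneg _ _ _)
  · rw [hf₁ a ha, hf₁ b hb, hf₂ t htt]
    exact key1 _ _ hcs hK a b t ha.1 hb.1 htt.1
  · rw [hf₁ a ha, hf₂ b hb, hf₁ t htt,
      menger_swap₂ (pt a 0) (b • pt (Real.cos φ) (Real.sin φ)) (pt t 0),
      menger_swap₂ (pt a 0) (pt 0 b) (pt t 0)]
    exact key1 _ _ hcs hK a t b ha.1 htt.1 hb.1
  · rw [hf₁ a ha, hf₂ b hb, hf₂ t htt,
      menger_swap₁ (pt a 0) (b • pt (Real.cos φ) (Real.sin φ))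
        (t • pt (Real.cos φ) (Real.sin φ)),
      menger_swap₂ (b • pt (Real.cos φ) (Real.sin φ)) (pt a 0)
        (t • pt (Real.cos φ) (Real.sin φ)),
      menger_swap₁ (pt a 0) (pt 0 b) (pt 0 t),
      menger_swap₂ (pt 0 b) (pt a 0) (pt 0 t)]
    exact key2 _ _ hcs hK b t a hb.1 htt.1 ha.1
  · rw [hf₂ a ha, hf₁ b hb, hf₁ t htt,
      menger_swap₁ (a • pt (Real.cos φ) (Real.sin φ)) (pt b 0) (pt t 0),
      menger_swap₂ (pt b 0) (a • pt (Real.cos φ) (Real.sin φ)) (pt t 0),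
      menger_swap₁ (pt 0 a) (pt b 0) (pt t 0),
      menger_swap₂ (pt b 0) (pt 0 a) (pt t 0)]
    exact key1 _ _ hcs hK b t a hb.1 htt.1 ha.1
  · rw [hf₂ a ha, hf₁ b hb, hf₂ t htt,
      menger_swap₂ (a • pt (Real.cos φ) (Real.sin φ)) (pt b 0)
        (t • pt (Real.cos φ) (Real.sin φ)),
      menger_swap₂ (pt 0 a) (pt b 0) (pt 0 t)]
    exact key2 _ _ hcs hK a t b ha.1 htt.1 hb.1
  · rw [hf₂ a ha, hf₂ b hb, hf₁ t htt]
    exact key2 _ _ hcs hK a b t ha.1 hb.1 htt.1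
  · rw [menger_eq_zero_of_collinear
      (collinear3 (pt (Real.cos φ) (Real.sin φ)) _ _ _ ⟨a, rfl⟩ ⟨b, rfl⟩ ⟨t, rfl⟩)]
    exact mul_nonneg (by positivity) (menger_nonneg _ _ _)
end
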